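/- Combinatorial moment bound: for i.i.d. random variables X₁,…,X_n with law μ and nonnegative measurable functions ψ₁,…,ψ_j with E_μ[∏_{i∈I} ψ_i(X)] < ∞ for every subset I ⊆ {1,…,j}, one has for all indices t₁,…,t_j ∈ {1,…,n}: E[∏_{i=1}^j ψ_i(X_{t_i})] ≤ ∑_{partitions P of {1,…,j}, P = ∪_r I_r} ∏_r E_μ[∏_{i∈I_r} ψ_i(X)]. -/

import Mathlib

open MeasureTheory ProbabilityTheory

open scoped ENNReal in
lemma stmt17_aux {Ω α : Type*} [MeasurableSpace Ω] [MeasurableSpace α]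
    (P : Measure Ω) [IsProbabilityMeasure P]
    (X : ℕ → Ω → α) (hXm : ∀ i, Measurable (X i))
    (hindep : iIndepFun X P)
    (g : ℕ → α → ℝ≥0∞) (hg : ∀ s, Measurable (g s)) (S : Finset ℕ) :
    ∫⁻ ω, ∏ s ∈ S, g s (X s ω) ∂P = ∏ s ∈ S, ∫⁻ ω, g s (X s ω) ∂P := by
  classical
  induction S using Finset.induction with
  | empty => simp
  | @insert a S ha ih =>
    have hdisj : Disjoint ({a} : Finset ℕ) S := by simpa using ha
    have hfin := hindep.indepFun_finset {a} S hdisj hXm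
    have hF : Measurable (fun v : ({a} : Finset ℕ) → α => g a (v ⟨a, by simp⟩)) :=
      (hg a).comp (measurable_pi_apply _)
    have hG : Measurable (fun v : {x // x ∈ S} → α => ∏ s ∈ S.attach, g s.1 (v s)) :=
      Finset.measurable_prod _ fun s _ => (hg s.1).comp (measurable_pi_apply _)
    have hIndep : IndepFun (fun ω => g a (X a ω)) (fun ω => ∏ s ∈ S, g s (X s ω)) P := by
      have h := hfin.comp hF hG
      have e1 : (fun ω => g a (X a ω)) =
          (fun v : ({a} : Finset ℕ) → α => g a (v ⟨a, by simp⟩)) ∘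
            (fun ω (k : ({a} : Finset ℕ)) => X k ω) := rfl
      have e2 : (fun ω => ∏ s ∈ S, g s (X s ω)) =
          (fun v : {x // x ∈ S} → α => ∏ s ∈ S.attach, g s.1 (v s)) ∘
            (fun ω (k : {x // x ∈ S}) => X k.1 ω) := by
        funext ω
        simp only [Function.comp_apply]
        rw [← Finset.prod_attach S (fun s => g s (X s ω))]
      rw [e1, e2]
      exact h
    simp only [Finset.prod_insert ha]
    rw [← ih]
    have := lintegral_mul_eq_lintegral_mul_lintegral_of_indepFun
      ((hg a).comp (hXm a))
      (Finset.measurable_prod S fun s _ => (hg s).comp (hXm s)) hIndep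
    simpa using this

open scoped Classical in
theorem stmt17 {Ω α : Type*} [MeasurableSpace Ω] [MeasurableSpace α]
    (P : Measure Ω) [IsProbabilityMeasure P] (μ : Measure α) [IsProbabilityMeasure μ]
    (X : ℕ → Ω → α) (hXm : ∀ i, Measurable (X i))
    (hindep : iIndepFun X P)
    (hlaw : ∀ i, Measure.map (X i) P = μ)
    (j : ℕ) (ψ : Fin j → α → ℝ) (hψm : ∀ i, Measurable (ψ i)) (hψ0 : ∀ i x, 0 ≤ ψ i x)
    (hint : ∀ I : Finset (Fin j), Integrable (fun x => ∏ i ∈ I, ψ i x) μ)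
    (n : ℕ) (t : Fin j → ℕ) (ht : ∀ i, t i < n) :
    ∫ ω, ∏ i, ψ i (X (t i) ω) ∂P ≤
      ∑ Q ∈ (Finset.univ : Finset (Finset (Finset (Fin j)))).filter
          (fun Q : Finset (Finset (Fin j)) => Q.sup id = Finset.univ ∧ ∅ ∉ Q ∧
            Set.PairwiseDisjoint (Q : Set (Finset (Fin j))) id),
        ∏ I ∈ Q, ∫ x, ∏ i ∈ I, ψ i x ∂μ := by
  -- fibers of t
  set T : Finset ℕ := Finset.univ.image t with hT
  set fib : ℕ → Finset (Fin j) := fun s => Finset.univ.filter (fun i => t i = s) with hfib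
  set Q₀ : Finset (Finset (Fin j)) := T.image fib with hQ₀
  -- value of the LHS
  set g : ℕ → α → ENNReal := fun s x => ENNReal.ofReal (∏ i ∈ fib s, ψ i x) with hg
  have hgm : ∀ s, Measurable (g s) := fun s =>
    ENNReal.measurable_ofReal.comp (Finset.measurable_prod _ fun i _ => hψm i)
  have key : ∫ ω, ∏ i, ψ i (X (t i) ω) ∂P = ∏ s ∈ T, ∫ x, ∏ i ∈ fib s, ψ i x ∂μ := by
    have hgroup : ∀ ω, ∏ i, ψ i (X (t i) ω) = ∏ s ∈ T, ∏ i ∈ fib s, ψ i (X s ω) := by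
      intro ω
      rw [← Finset.prod_fiberwise_of_maps_to
        (fun i (_ : i ∈ (Finset.univ : Finset (Fin j))) =>
          Finset.mem_image_of_mem t (Finset.mem_univ i))
        (fun i => ψ i (X (t i) ω))]
      refine Finset.prod_congr rfl fun s _ => Finset.prod_congr rfl fun i hi => ?_
      rw [(Finset.mem_filter.mp hi).2]
    have h1 : ∫ ω, ∏ i, ψ i (X (t i) ω) ∂P
        = (∫⁻ ω, ∏ s ∈ T, g s (X s ω) ∂P).toReal := by
      rw [integral_eq_lintegral_of_nonneg_ae
        (Filter.Eventually.of_forall fun ω => Finset.prod_nonneg fun i _ => hψ0 i _)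
        ((Finset.measurable_prod _ fun i _ => (hψm i).comp (hXm (t i))).aestronglyMeasurable)]
      congr 1
      refine lintegral_congr fun ω => ?_
      rw [hgroup ω, ENNReal.ofReal_prod_of_nonneg
        (fun s _ => Finset.prod_nonneg fun i _ => hψ0 i _)]
    have h2 : ∀ s, ∫⁻ ω, g s (X s ω) ∂P = ∫⁻ x, g s x ∂μ := by
      intro s
      rw [← hlaw s, lintegral_map (hgm s) (hXm s)]
    have h3 : ∀ s, ∫ x, ∏ i ∈ fib s, ψ i x ∂μ = (∫⁻ x, g s x ∂μ).toReal := by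
      intro s
      rw [integral_eq_lintegral_of_nonneg_ae
        (Filter.Eventually.of_forall fun x => Finset.prod_nonneg fun i _ => hψ0 i _)
        ((Finset.measurable_prod _ fun i _ => hψm i).aestronglyMeasurable)]
    rw [h1, stmt17_aux P X hXm hindep g hgm T, ENNReal.toReal_prod]
    exact Finset.prod_congr rfl fun s _ => by rw [h3 s, h2 s]
  rw [key]
  -- the fibers map injectively onto Q₀
  have hinj : ∀ s ∈ T, ∀ s' ∈ T, fib s = fib s' → s = s' := by
    intro s hs s' hs' h
    obtain ⟨i, _, rfl⟩ := Finset.mem_image.mp hs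
    have : i ∈ fib (t i) := Finset.mem_filter.mpr ⟨Finset.mem_univ i, rfl⟩
    rw [h] at this
    exact (Finset.mem_filter.mp this).2
  have hprod : ∏ s ∈ T, ∫ x, ∏ i ∈ fib s, ψ i x ∂μ
      = ∏ I ∈ Q₀, ∫ x, ∏ i ∈ I, ψ i x ∂μ := by
    rw [hQ₀, Finset.prod_image hinj]
  rw [hprod]
  -- Q₀ is a valid partition
  have hmem : Q₀ ∈ (Finset.univ : Finset (Finset (Finset (Fin j)))).filter
      (fun Q : Finset (Finset (Fin j)) => Q.sup id = Finset.univ ∧ ∅ ∉ Q ∧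
        Set.PairwiseDisjoint (Q : Set (Finset (Fin j))) id) := by
    refine Finset.mem_filter.mpr ⟨Finset.mem_univ _, ?_, ?_, ?_⟩
    · apply le_antisymm (le_top)
      intro i _
      refine Finset.mem_sup.mpr ⟨fib (t i), ?_, ?_⟩
      · exact Finset.mem_image.mpr ⟨t i, Finset.mem_image_of_mem t (Finset.mem_univ i), rfl⟩
      · exact Finset.mem_filter.mpr ⟨Finset.mem_univ i, rfl⟩
    · intro h
      obtain ⟨s, hs, hfs⟩ := Finset.mem_image.mp h
      obtain ⟨i, _, rfl⟩ := Finset.mem_image.mp hs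
      have : i ∈ fib (t i) := Finset.mem_filter.mpr ⟨Finset.mem_univ i, rfl⟩
      rw [hfs] at this
      exact absurd this (Finset.notMem_empty i)
    · intro I hI J hJ hIJ
      obtain ⟨s, hs, rfl⟩ := Finset.mem_image.mp hI
      obtain ⟨s', hs', rfl⟩ := Finset.mem_image.mp hJ
      have hss' : s ≠ s' := fun h => hIJ (by rw [h])
      refine Finset.disjoint_left.mpr fun i hi hi' => ?_
      simp only [id] at hi hi'
      exact hss' (((Finset.mem_filter.mp hi).2).symm.trans (Finset.mem_filter.mp hi').2)
  -- each term of the sum is nonnegative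
  refine Finset.single_le_sum (f := fun Q => ∏ I ∈ Q, ∫ x, ∏ i ∈ I, ψ i x ∂μ)
    (fun Q _ => Finset.prod_nonneg fun I _ =>
    integral_nonneg fun x => Finset.prod_nonneg fun i _ => hψ0 i x) hmem
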